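/- Let n, m ≥ 1, let A₁, A₂ be real symmetric positive definite n×n matrices, let B₁, B₂ be real n×m matrices, and let λ ∈ [0, 1]. Then the m×m matrix λ·B₁ᵀA₁⁻¹B₁ + (1−λ)·B₂ᵀA₂⁻¹B₂ − (λB₁ + (1−λ)B₂)ᵀ (λA₁ + (1−λ)A₂)⁻¹ (λB₁ + (1−λ)B₂) is positive semi-definite; that is, the map (A, B) ↦ BᵀA⁻¹B is convex with respect to the Loewner order on the set of pairs of a positive definite matrix and an arbitrary n×m matrix. -/

import Mathlib

open Matrix

lemma psd_smul_aux {k : Type*} [Fintype k] {M : Matrix k k ℝ} (hM : M.PosSemidef)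
    {c : ℝ} (hc : 0 ≤ c) : (c • M).PosSemidef := by
  refine ⟨?_, fun x => ?_⟩
  · unfold Matrix.IsHermitian
    rw [conjTranspose_smul, hM.1]
    simp
  · exact (hM.smul hc).2 x

lemma pd_smul_aux {k : Type*} [Fintype k] {M : Matrix k k ℝ} (hM : M.PosDef)
    {c : ℝ} (hc : 0 < c) : (c • M).PosDef := by
  refine ⟨?_, fun x hx => ?_⟩
  · unfold Matrix.IsHermitian
    rw [conjTranspose_smul, hM.1]
    simp
  · exact (hM.smul hc).2 hx

lemma block_psd {k l : ℕ} {A : Matrix (Fin k) (Fin k) ℝ} (hA : A.PosDef)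
    (B : Matrix (Fin k) (Fin l) ℝ) :
    (fromBlocks A B Bᴴ (Bᴴ * A⁻¹ * B)).PosSemidef := by
  have : Invertible A := hA.isUnit.invertible
  rw [PosDef.fromBlocks₁₁ B _ hA]
  simpa using Matrix.PosSemidef.zero

/-- Joint convexity, in the Loewner order, of `(A, B) ↦ Bᵀ A⁻¹ B`:
for positive definite `A₁, A₂`, arbitrary `B₁, B₂` and `λ ∈ [0,1]`,
`λ B₁ᵀA₁⁻¹B₁ + (1-λ) B₂ᵀA₂⁻¹B₂ - (λB₁+(1-λ)B₂)ᵀ (λA₁+(1-λ)A₂)⁻¹ (λB₁+(1-λ)B₂)`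
is positive semi-definite. -/
theorem stmt10
    {n m : ℕ} (hn : 1 ≤ n) (hm : 1 ≤ m)
    (A₁ A₂ : Matrix (Fin n) (Fin n) ℝ) (hA₁ : A₁.PosDef) (hA₂ : A₂.PosDef)
    (B₁ B₂ : Matrix (Fin n) (Fin m) ℝ)
    (lam : ℝ) (hlam0 : 0 ≤ lam) (hlam1 : lam ≤ 1) :
    (lam • (B₁ᵀ * A₁⁻¹ * B₁) + (1 - lam) • (B₂ᵀ * A₂⁻¹ * B₂)
      - (lam • B₁ + (1 - lam) • B₂)ᵀ * (lam • A₁ + (1 - lam) • A₂)⁻¹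
        * (lam • B₁ + (1 - lam) • B₂)).PosSemidef := by
  have hconj : ∀ (C : Matrix (Fin n) (Fin m) ℝ), Cᴴ = Cᵀ := fun C => by
    ext i j; simp [conjTranspose_apply]
  set A := lam • A₁ + (1 - lam) • A₂ with hAdef
  have hA : A.PosDef := by
    rcases eq_or_lt_of_le hlam0 with h0 | h0
    · have : A = A₂ := by simp [hAdef, ← h0]
      rw [this]; exact hA₂
    ·       exact (pd_smul_aux hA₁ h0).add_posSemidef (psd_smul_aux hA₂.posSemidef (by linarith))
  have hM : ((lam • fromBlocks A₁ B₁ B₁ᴴ (B₁ᴴ * A₁⁻¹ * B₁))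
      + (1 - lam) • fromBlocks A₂ B₂ B₂ᴴ (B₂ᴴ * A₂⁻¹ * B₂)).PosSemidef := by
    refine Matrix.PosSemidef.add ?_ ?_
    · exact psd_smul_aux (block_psd hA₁ B₁) hlam0
    · exact psd_smul_aux (block_psd hA₂ B₂) (by linarith)
  rw [fromBlocks_smul, fromBlocks_smul, fromBlocks_add] at hM
  set B := lam • B₁ + (1 - lam) • B₂ with hBdef
  have hBH : lam • B₁ᴴ + (1 - lam) • B₂ᴴ = Bᴴ := by
    simp [hBdef, conjTranspose_add, conjTranspose_smul]
  rw [hBH] at hM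
  have : Invertible A := hA.isUnit.invertible
  have := (PosDef.fromBlocks₁₁ B
    (lam • (B₁ᴴ * A₁⁻¹ * B₁) + (1 - lam) • (B₂ᴴ * A₂⁻¹ * B₂)) hA).mp hM
  simpa [hconj] using this
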